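/- Let C and D be triangulated categories, R : D → C an exact functor, T an exact autoequivalence of D and C₂ an exact autoequivalence of C such that there is a natural isomorphism R∘T ≅ C₂∘R. Let G be a split-generator of D such that R G is a split-generator of C. Then for every t ∈ ℝ and every n ≥ 1 one has δ_t(R G, C₂ⁿ(R G)) ≤ δ_t(G, Tⁿ G), and consequently limsup_{n→∞} (1/n)·log δ_t(R G, C₂ⁿ(R G)) ≤ limsup_{n→∞} (1/n)·log δ_t(G, Tⁿ G). (This is the lower bound h_t(T_S) ≥ h_t(C_S[2]) of Theorem 1.7(1), for a spherical functor S with right adjoint R, twist T = T_S and C₂ = C_S[2], using R∘T_S ≅ (C_S[2])∘R.) -/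

import Mathlib

open CategoryTheory CategoryTheory.Limits CategoryTheory.Pretriangulated Filter
open scoped ENNReal

universe v₁ v₂ u₁ u₂

variable {D : Type u₁} [Category.{v₁} D] [Preadditive D] [HasZeroObject D]
  [HasShift D ℤ] [∀ n : ℤ, (shiftFunctor D n).Additive] [Pretriangulated D]

/-- An object `F` admits a cone decomposition with the given list of components. -/
inductive ConeDecomp : D → List D → Prop
  | nil {F : D} (h : IsZero F) : ConeDecomp F []
  | step {X : D} (F : D) {l : List D} (A : D) (hX : ConeDecomp X l)
      (f : X ⟶ F) (g : F ⟶ A) (h : A ⟶ X⟦(1 : ℤ)⟧)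
      (ht : Triangle.mk f g h ∈ distTriang D) : ConeDecomp F (l ++ [A])

open scoped Classical in
/-- The categorical complexity `δ_t(E,F)`. -/
noncomputable def catDelta [HasBinaryBiproducts D] (t : ℝ) (E F : D) : ℝ≥0∞ :=
  if IsZero F then 0
  else sInf {x : ℝ≥0∞ | ∃ (ns : List ℤ) (F' : D),
      ns ≠ [] ∧ ConeDecomp (F ⊞ F') (ns.map fun n => E⟦n⟧) ∧
      x = (ns.map fun n => ENNReal.ofReal (Real.exp ((n : ℝ) * t))).sum}

/-- Objects split-generated by `G`. -/
inductive SplitGen (G : D) : D → Prop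
  | self : SplitGen G G
  | zero {X : D} (h : IsZero X) : SplitGen G X
  | ofIso {X Y : D} (e : X ≅ Y) (h : SplitGen G X) : SplitGen G Y
  | shift {X : D} (n : ℤ) (h : SplitGen G X) : SplitGen G (X⟦n⟧)
  | cone₂ {X Y Z : D} (f : X ⟶ Y) (g : Y ⟶ Z) (h : Z ⟶ X⟦(1 : ℤ)⟧)
      (ht : Triangle.mk f g h ∈ distTriang D) (hX : SplitGen G X) (hZ : SplitGen G Z) :
      SplitGen G Y
  | summand {X Y : D} (s : X ⟶ Y) (p : Y ⟶ X) (hsp : s ≫ p = 𝟙 X)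
      (h : SplitGen G Y) : SplitGen G X

/-- `G` is a split-generator. -/
def IsSplitGenerator (G : D) : Prop := ∀ X : D, SplitGen G X

/-! ### Auxiliary lemmas -/

/-- Cone decompositions transfer along isomorphisms of the total object. -/
lemma ConeDecomp.ofIso' {F F₂ : D} {l : List D} (h : ConeDecomp F l) (e : F ≅ F₂) :
    ConeDecomp F₂ l := by
  cases h with
  | nil h => exact ConeDecomp.nil (h.of_iso e.symm)
  | step F A hX f g hh ht =>
    refine ConeDecomp.step _ _ hX (f ≫ e.hom) (e.inv ≫ g) hh ?_
    refine isomorphic_distinguished _ ht _ ?_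
    exact Triangle.isoMk _ _ (Iso.refl _) e.symm (Iso.refl _) (by show (f ≫ e.hom) ≫ e.inv = 𝟙 _ ≫ f; simp) (by show (e.inv ≫ g) ≫ 𝟙 _ = e.inv ≫ g; simp) (by show hh ≫ (shiftFunctor D (1 : ℤ)).map (𝟙 _) = 𝟙 _ ≫ hh; simp)

/-- Cone decompositions transfer along componentwise isomorphisms. -/
lemma ConeDecomp.ofForall₂ {F : D} {l l₂ : List D} (h : ConeDecomp F l)
    (h₂ : List.Forall₂ (fun A B => Nonempty (A ≅ B)) l l₂) : ConeDecomp F l₂ := by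
  induction h generalizing l₂ with
  | nil hz => cases h₂; exact ConeDecomp.nil hz
  | step F A hX f g hh ht ih =>
    have hrev := List.forall₂_reverse_iff.mpr h₂
    rw [List.reverse_append] at hrev
    simp only [List.reverse_singleton, List.singleton_append] at hrev
    rcases List.forall₂_cons_left_iff.mp hrev with ⟨B, u, hAB, hrest, hu⟩
    have hl₂ : l₂ = u.reverse ++ [B] := by
      have : l₂.reverse.reverse = (B :: u).reverse := by rw [hu]
      simpa using this
    obtain ⟨eA⟩ := hAB
    have hXd := ih (List.forall₂_reverse_iff.mp
      (show List.Forall₂ (fun A B => Nonempty (A ≅ B)) _ u.reverse.reverse by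
        simpa using hrest))
    rw [hl₂]
    refine ConeDecomp.step _ _ hXd f (g ≫ eA.hom) (eA.inv ≫ hh) ?_
    refine isomorphic_distinguished _ ht _ ?_
    exact Triangle.isoMk _ _ (Iso.refl _) (Iso.refl _) eA.symm (by show f ≫ 𝟙 _ = 𝟙 _ ≫ f; simp) (by show (g ≫ eA.hom) ≫ eA.inv = 𝟙 _ ≫ g; simp) (by show (eA.inv ≫ hh) ≫ (shiftFunctor D (1 : ℤ)).map (𝟙 _) = eA.inv ≫ hh; simp)

variable {C : Type u₂} [Category.{v₂} C] [Preadditive C] [HasZeroObject C] [HasShift C ℤ]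
  [∀ n : ℤ, (shiftFunctor C n).Additive] [Pretriangulated C]

lemma isZero_map (R : D ⥤ C) [R.CommShift ℤ] [R.IsTriangulated] {F : D} (h : IsZero F) : IsZero (R.obj F) := by
  rw [IsZero.iff_id_eq_zero, ← R.map_id, (IsZero.iff_id_eq_zero F).mp h, R.map_zero]

/-- Triangulated functors map cone decompositions to cone decompositions. -/
lemma ConeDecomp.map (R : D ⥤ C) [R.CommShift ℤ] [R.IsTriangulated] {F : D} {l : List D}
    (h : ConeDecomp F l) : ConeDecomp (R.obj F) (l.map R.obj) := by
  induction h with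
  | nil hz => exact ConeDecomp.nil (isZero_map R hz)
  | step F A hX f g hh ht ih =>
    rw [List.map_append]
    exact ConeDecomp.step _ _ ih (R.map f) (R.map g)
      (R.map hh ≫ (R.commShiftIso (1 : ℤ)).hom.app _) (R.map_distinguished _ ht)

lemma catDelta_le_of_iso [HasBinaryBiproducts D] (t : ℝ) (E : D) {F F₂ : D} (e : F ≅ F₂) :
    catDelta t E F₂ ≤ catDelta t E F := by
  classical
  unfold catDelta
  by_cases h2 : IsZero F₂
  · simp [h2]
  have h1 : ¬ IsZero F := fun h => h2 (h.of_iso e.symm)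
  rw [if_neg h1, if_neg h2]
  refine sInf_le_sInf ?_
  rintro x ⟨ns, F', hne, hd, hx⟩
  exact ⟨ns, F', hne, hd.ofIso' (biprod.mapIso e (Iso.refl F')), hx⟩

lemma catDelta_map_le [HasBinaryBiproducts D] [HasBinaryBiproducts C]
    (R : D ⥤ C) [R.CommShift ℤ] [R.IsTriangulated] (t : ℝ) (E F : D) :
    catDelta t (R.obj E) (R.obj F) ≤ catDelta t E F := by
  classical
  haveI := Limits.preservesBinaryBiproducts_of_preservesBinaryProducts R
  unfold catDelta
  by_cases hRF : IsZero (R.obj F)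
  · simp [hRF]
  have hF : ¬ IsZero F := fun h => hRF (isZero_map R h)
  rw [if_neg hF, if_neg hRF]
  refine sInf_le_sInf ?_
  rintro x ⟨ns, F', hne, hd, hx⟩
  refine ⟨ns, R.obj F', hne, ?_, hx⟩
  have h1 := hd.map R
  rw [List.map_map] at h1
  have h2 : ConeDecomp (R.obj (F ⊞ F')) (ns.map fun n => (R.obj E)⟦n⟧) := by
    refine h1.ofForall₂ ?_
    rw [List.forall₂_map_left_iff, List.forall₂_map_right_iff]
    refine List.forall₂_same.mpr fun n _ => ⟨?_⟩
    exact (R.commShiftIso n).app E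
  exact h2.ofIso' (R.mapBiprod F F')

/-- An iso iterated through a functor's object map. -/
noncomputable def mapIterIso (C₂ : C ⥤ C) : ∀ (n : ℕ) {X Y : C}, (X ≅ Y) →
    ((C₂.obj)^[n] X ≅ (C₂.obj)^[n] Y)
  | 0, _, _, e => e
  | n + 1, _, _, e => mapIterIso C₂ n (C₂.mapIso e)

/-- `R (Tⁿ X) ≅ C₂ⁿ (R X)` from `T ⋙ R ≅ R ⋙ C₂`. -/
noncomputable def iterCommIso (R : D ⥤ C) (T : D ⥤ D) (C₂ : C ⥤ C) (e : T ⋙ R ≅ R ⋙ C₂) :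
    ∀ (n : ℕ) (X : D), R.obj ((T.obj)^[n] X) ≅ (C₂.obj)^[n] (R.obj X)
  | 0, _ => Iso.refl _
  | n + 1, X => iterCommIso R T C₂ e n (T.obj X) ≪≫ mapIterIso C₂ n (e.app X)

/-- Theorem 1.7(1) (lower bound): `h_t(T_S) ≥ h_t(C_S[2])`, via `R ∘ T ≅ C₂ ∘ R`. -/
theorem twist_entropy_lower_bound
    {C : Type u₂} [Category.{v₂} C] [Preadditive C] [HasZeroObject C] [HasShift C ℤ]
    [∀ n : ℤ, (shiftFunctor C n).Additive] [Pretriangulated C] [HasBinaryBiproducts C]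
    [HasBinaryBiproducts D]
    (R : D ⥤ C) [R.CommShift ℤ] [R.IsTriangulated]
    (T : D ⥤ D) [T.CommShift ℤ] [T.IsTriangulated] [T.IsEquivalence]
    (C₂ : C ⥤ C) [C₂.CommShift ℤ] [C₂.IsTriangulated] [C₂.IsEquivalence]
    (e : T ⋙ R ≅ R ⋙ C₂)
    (G : D) (hG : IsSplitGenerator G) (hRG : IsSplitGenerator (R.obj G)) (t : ℝ) :
    (∀ n : ℕ, 1 ≤ n →
      catDelta t (R.obj G) ((C₂.obj)^[n] (R.obj G)) ≤ catDelta t G ((T.obj)^[n] G)) ∧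
    limsup (fun n : ℕ => ((n : ℝ)⁻¹ : EReal) *
        ENNReal.log (catDelta t (R.obj G) ((C₂.obj)^[n] (R.obj G)))) atTop ≤
      limsup (fun n : ℕ => ((n : ℝ)⁻¹ : EReal) *
        ENNReal.log (catDelta t G ((T.obj)^[n] G))) atTop := by
  have key : ∀ n : ℕ,
      catDelta t (R.obj G) ((C₂.obj)^[n] (R.obj G)) ≤ catDelta t G ((T.obj)^[n] G) := by
    intro n
    calc catDelta t (R.obj G) ((C₂.obj)^[n] (R.obj G))
        ≤ catDelta t (R.obj G) (R.obj ((T.obj)^[n] G)) :=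
          catDelta_le_of_iso t (R.obj G) (iterCommIso R T C₂ e n G)
      _ ≤ catDelta t G ((T.obj)^[n] G) := catDelta_map_le R t G _
  refine ⟨fun n _ => key n, ?_⟩
  refine limsup_le_limsup ?_
  refine Eventually.of_forall fun n => ?_
  refine mul_le_mul_of_nonneg_left ?_ ?_
  · exact ENNReal.log_monotone (key n)
  · exact EReal.coe_nonneg.mpr (by positivity)
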